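/- Let d ≥ 2 be an integer, n : ℕ, and p ∈ [0,1]. Then p · Tr(G_d^{⊗n} · σ_d^{⊗n}) + (1−p) · Tr((1 − G_d^{⊗n}) · α_d^{⊗n}) = p · ((d−1)/(d+1))^n; in particular, the two-outcome POVM {G_d^{⊗n}, 1 − G_d^{⊗n}} discriminates σ_d^{⊗n} from α_d^{⊗n} (with prior probabilities p and 1−p) with error probability exactly p((d−1)/(d+1))^n. -/

import Mathlib

open Matrix Finset
open scoped BigOperators Kronecker ComplexOrder

noncomputable section

/-- The flip (swap) operator on `ℂ^d ⊗ ℂ^d`. -/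
def Flip (d : ℕ) : Matrix (Fin d × Fin d) (Fin d × Fin d) ℂ :=
  Matrix.of fun p q => if p.1 = q.2 ∧ p.2 = q.1 then 1 else 0

/-- Projection onto the symmetric subspace, `Π_s = (1 + F)/2`. -/
def projSym (d : ℕ) : Matrix (Fin d × Fin d) (Fin d × Fin d) ℂ :=
  (2 : ℂ)⁻¹ • (1 + Flip d)

/-- Projection onto the antisymmetric subspace, `Π_a = (1 - F)/2`. -/
def projAsym (d : ℕ) : Matrix (Fin d × Fin d) (Fin d × Fin d) ℂ :=
  (2 : ℂ)⁻¹ • (1 - Flip d)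

/-- The symmetric Werner state `σ_d = (2/(d(d+1))) • Π_s`. -/
def wernerSym (d : ℕ) : Matrix (Fin d × Fin d) (Fin d × Fin d) ℂ :=
  (2 / ((d : ℂ) * ((d : ℂ) + 1))) • projSym d

/-- The antisymmetric Werner state `α_d = (2/(d(d-1))) • Π_a`. -/
def wernerAsym (d : ℕ) : Matrix (Fin d × Fin d) (Fin d × Fin d) ℂ :=
  (2 / ((d : ℂ) * ((d : ℂ) - 1))) • projAsym d

/-- The POVM element `G_d`: diagonal, with `(i,j),(i,j)` entry `1` iff `i ≠ j`. -/
def Gmat (d : ℕ) : Matrix (Fin d × Fin d) (Fin d × Fin d) ℂ :=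
  Matrix.diagonal fun p => if p.1 ≠ p.2 then 1 else 0

/-- `n`-fold tensor power of a matrix on `ℂ^d ⊗ ℂ^d`. -/
def tpow {d : ℕ} (n : ℕ) (X : Matrix (Fin d × Fin d) (Fin d × Fin d) ℂ) :
    Matrix (Fin n → Fin d × Fin d) (Fin n → Fin d × Fin d) ℂ :=
  Matrix.of fun f g => ∏ m, X (f m) (g m)

/-- The twirled single-copy POVM element `M_d = ((d-1)/(d+1)) • Π_s + Π_a`. -/
def MdMat (d : ℕ) : Matrix (Fin d × Fin d) (Fin d × Fin d) ℂ :=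
  (((d : ℂ) - 1) / ((d : ℂ) + 1)) • projSym d + projAsym d

/-- `A_k`: sum over all `k`-element subsets `S` of the copies of the tensor product with
`Π_a` on copies in `S` and `Π_s` elsewhere. -/
def Amat (d n k : ℕ) : Matrix (Fin n → Fin d × Fin d) (Fin n → Fin d × Fin d) ℂ :=
  ∑ S ∈ Finset.powersetCard k (Finset.univ : Finset (Fin n)),
    Matrix.of fun f g => ∏ m, (if m ∈ S then projAsym d else projSym d) (f m) (g m)

/-- Partial transpose on `ℂ^d ⊗ ℂ^d`. -/
def pt {d : ℕ} (X : Matrix (Fin d × Fin d) (Fin d × Fin d) ℂ) :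
    Matrix (Fin d × Fin d) (Fin d × Fin d) ℂ :=
  Matrix.of fun p q => X (p.1, q.2) (q.1, p.2)

/-- The maximally entangled state `Φ_d`. -/
def Phi (d : ℕ) : Matrix (Fin d × Fin d) (Fin d × Fin d) ℂ :=
  Matrix.of fun p q => if p.1 = p.2 ∧ q.1 = q.2 then ((d : ℂ))⁻¹ else 0

/-- `n`-copy partial transpose. -/
def ptN {d n : ℕ} (Y : Matrix (Fin n → Fin d × Fin d) (Fin n → Fin d × Fin d) ℂ) :
    Matrix (Fin n → Fin d × Fin d) (Fin n → Fin d × Fin d) ℂ :=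
  Matrix.of fun f g => Y (fun m => ((f m).1, (g m).2)) (fun m => ((g m).1, (f m).2))

/-- `T_l`: sum over all `l`-element subsets `S` of the copies of the tensor product with
`Φ_d` on copies in `S` and `1 - Φ_d` elsewhere. -/
def Tmat (d n l : ℕ) : Matrix (Fin n → Fin d × Fin d) (Fin n → Fin d × Fin d) ℂ :=
  ∑ S ∈ Finset.powersetCard l (Finset.univ : Finset (Fin n)),
    Matrix.of fun f g => ∏ m, (if m ∈ S then Phi d else (1 - Phi d)) (f m) (g m)

/-- The matrix `Q` of the linear program: `Q l k = Σ_{j=0}^{min(l,k)}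
(n−l choose k−j)(l choose j)(1−d)^j (1+d)^{l−j}`. -/
def Qmat (n : ℕ) (d : ℝ) (l k : ℕ) : ℝ :=
  ∑ j ∈ Finset.range (min l k + 1),
    ((n - l).choose (k - j) : ℝ) * (l.choose j : ℝ) * (1 - d) ^ j * (1 + d) ^ (l - j)

/-- A PPT POVM element on the `n`-copy space: `E`, `1 - E`, `E^Γ`, `(1-E)^Γ` all PSD. -/
def IsPPTPovmElem {d n : ℕ}
    (E : Matrix (Fin n → Fin d × Fin d) (Fin n → Fin d × Fin d) ℂ) : Prop :=
  E.PosSemidef ∧ (1 - E).PosSemidef ∧ (ptN E).PosSemidef ∧ (ptN (1 - E)).PosSemidef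

/-- Error probability for discriminating `σ_d^{⊗n}` (prior `p`) from `α_d^{⊗n}`
(prior `1-p`) with the two-outcome POVM `{E, 1 - E}`. -/
def errProb (d n : ℕ) (p : ℝ)
    (E : Matrix (Fin n → Fin d × Fin d) (Fin n → Fin d × Fin d) ℂ) : ℝ :=
  ((p : ℂ) * (E * tpow n (wernerSym d)).trace
    + (1 - (p : ℂ)) * ((1 - E) * tpow n (wernerAsym d)).trace).re

/-- Separability of a bipartite matrix. -/
def IsSep {I J : Type*} [Fintype I] [Fintype J]
    (W : Matrix (I × J) (I × J) ℂ) : Prop :=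
  ∃ (m : ℕ) (A : Fin m → Matrix I I ℂ) (B : Fin m → Matrix J J ℂ),
    (∀ i, (A i).PosSemidef) ∧ (∀ i, (B i).PosSemidef) ∧ W = ∑ i, A i ⊗ₖ B i

/-- Trace norm `‖X‖₁ = Tr √(Xᴴ X)`. -/
def traceNorm {ι : Type*} [Fintype ι] [DecidableEq ι] (X : Matrix ι ι ℂ) : ℝ :=
  ((Matrix.posSemidef_conjTranspose_mul_self X).1.eigenvectorUnitary.1 *
    Matrix.diagonal ((fun r : ℝ => (r : ℂ)) ∘ (Real.sqrt ·) ∘ (Matrix.posSemidef_conjTranspose_mul_self X).1.eigenvalues) *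
    (star (Matrix.posSemidef_conjTranspose_mul_self X).1.eigenvectorUnitary : Matrix ι ι ℂ)).trace.re

/-- Frobenius (Hilbert–Schmidt) norm `‖X‖₂ = √(Tr (Xᴴ X))`. -/
def frobNorm {ι : Type*} [Fintype ι] (X : Matrix ι ι ℂ) : ℝ :=
  Real.sqrt ((Xᴴ * X).trace.re)

section AuxErrProb

private lemma tpow_mul_aux {d : ℕ} (n : ℕ) (X Y : Matrix (Fin d × Fin d) (Fin d × Fin d) ℂ)
    (f g : Fin n → Fin d × Fin d) :
    ∑ h : Fin n → Fin d × Fin d, (∏ m, X (f m) (h m)) * ∏ m, Y (h m) (g m)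
      = ∏ m, (X * Y) (f m) (g m) := by
  simp only [Matrix.mul_apply]
  rw [Finset.prod_univ_sum]
  rw [← Fintype.piFinset_univ]
  refine Finset.sum_congr rfl fun h _ => ?_
  rw [← Finset.prod_mul_distrib]

private lemma trace_tpow_sum_aux {d : ℕ} (n : ℕ)
    (X : Matrix (Fin d × Fin d) (Fin d × Fin d) ℂ) :
    ∑ f : Fin n → Fin d × Fin d, ∏ m, X (f m) (f m) = (∑ p, X p p) ^ n := by
  rw [← Fin.prod_const n (∑ p, X p p), Finset.prod_univ_sum, ← Fintype.piFinset_univ]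

private lemma trace_tpow {d : ℕ} (n : ℕ) (X : Matrix (Fin d × Fin d) (Fin d × Fin d) ℂ) :
    (tpow n X).trace = X.trace ^ n := by
  unfold Matrix.trace tpow
  simpa using trace_tpow_sum_aux n X

private lemma trace_tpow_mul {d : ℕ} (n : ℕ)
    (X Y : Matrix (Fin d × Fin d) (Fin d × Fin d) ℂ) :
    (tpow n X * tpow n Y).trace = ((X * Y).trace) ^ n := by
  have hmul : tpow n X * tpow n Y = tpow n (X * Y) := by
    ext f g
    simp only [tpow, Matrix.mul_apply, Matrix.of_apply]
    exact tpow_mul_aux n X Y f g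
  rw [hmul, trace_tpow]

private lemma offdiag_card (d : ℕ) :
    ∑ p : Fin d × Fin d, (if p.1 = p.2 then (0:ℂ) else 1) = (d:ℂ) * ((d:ℂ) - 1) := by
  rw [Fintype.sum_prod_type]
  have h1 : ∀ i : Fin d, ∑ j : Fin d, (if i = (j:Fin d) then (0:ℂ) else 1)
      = (d:ℂ) - 1 := by
    intro i
    have : ∑ j : Fin d, (if i = j then (0:ℂ) else 1)
        = ∑ j : Fin d, (1 - if i = j then (1:ℂ) else 0) := by
      refine Finset.sum_congr rfl fun j _ => by split <;> simp
    rw [this, Finset.sum_sub_distrib]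
    simp [mul_comm]
  simp only [h1]
  simp [Finset.sum_const, mul_comm]
  ring

private lemma trGsym (d : ℕ) (hd : 2 ≤ d) :
    (Gmat d * wernerSym d).trace = ((d:ℂ)-1)/((d:ℂ)+1) := by
  have hd0 : ((d:ℂ)) ≠ 0 := Nat.cast_ne_zero.mpr (by omega)
  have hd1 : ((d:ℂ)) + 1 ≠ 0 := by
    intro h
    have : ((d+1 : ℕ) : ℂ) = 0 := by push_cast; linear_combination h
    exact absurd (Nat.cast_eq_zero.mp this) (by omega)
  unfold Matrix.trace Gmat wernerSym projSym Flip
  have key : ∀ p : Fin d × Fin d,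
      ((Matrix.diagonal fun p : Fin d × Fin d => if p.1 ≠ p.2 then (1:ℂ) else 0) *
        ((2 / ((d : ℂ) * ((d : ℂ) + 1))) • ((2 : ℂ)⁻¹ •
          (1 + Matrix.of fun p q : Fin d × Fin d =>
            if p.1 = q.2 ∧ p.2 = q.1 then (1:ℂ) else 0)))).diag p
      = ((d:ℂ)*((d:ℂ)+1))⁻¹ * (if p.1 = p.2 then (0:ℂ) else 1) := by
    intro p
    simp only [Matrix.diag_apply, Matrix.diagonal_mul, Matrix.smul_apply, Matrix.add_apply,
      Matrix.one_apply, Matrix.of_apply, smul_eq_mul]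
    by_cases h : p.1 = p.2 <;> simp [h] <;> field_simp <;> ring
  rw [Finset.sum_congr rfl fun p _ => key p, ← Finset.mul_sum, offdiag_card]
  field_simp

private lemma trGasym (d : ℕ) (hd : 2 ≤ d) :
    (Gmat d * wernerAsym d).trace = 1 := by
  have hd0 : ((d:ℂ)) ≠ 0 := Nat.cast_ne_zero.mpr (by omega)
  have hd1 : ((d:ℂ)) - 1 ≠ 0 :=
    sub_ne_zero.mpr (by exact_mod_cast (by omega : d ≠ 1))
  unfold Matrix.trace Gmat wernerAsym projAsym Flip
  have key : ∀ p : Fin d × Fin d,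
      ((Matrix.diagonal fun p : Fin d × Fin d => if p.1 ≠ p.2 then (1:ℂ) else 0) *
        ((2 / ((d : ℂ) * ((d : ℂ) - 1))) • ((2 : ℂ)⁻¹ •
          (1 - Matrix.of fun p q : Fin d × Fin d =>
            if p.1 = q.2 ∧ p.2 = q.1 then (1:ℂ) else 0)))).diag p
      = ((d:ℂ)*((d:ℂ)-1))⁻¹ * (if p.1 = p.2 then (0:ℂ) else 1) := by
    intro p
    simp only [Matrix.diag_apply, Matrix.diagonal_mul, Matrix.smul_apply, Matrix.sub_apply,
      Matrix.one_apply, Matrix.of_apply, smul_eq_mul]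
    by_cases h : p.1 = p.2 <;> simp [h] <;> field_simp <;> ring
  rw [Finset.sum_congr rfl fun p _ => key p, ← Finset.mul_sum, offdiag_card]
  field_simp

private lemma trAsym (d : ℕ) (hd : 2 ≤ d) :
    (wernerAsym d).trace = 1 := by
  have hd0 : ((d:ℂ)) ≠ 0 := Nat.cast_ne_zero.mpr (by omega)
  have hd1 : ((d:ℂ)) - 1 ≠ 0 :=
    sub_ne_zero.mpr (by exact_mod_cast (by omega : d ≠ 1))
  unfold Matrix.trace wernerAsym projAsym Flip
  have key : ∀ p : Fin d × Fin d,
      (((2 / ((d : ℂ) * ((d : ℂ) - 1))) • ((2 : ℂ)⁻¹ •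
          (1 - Matrix.of fun p q : Fin d × Fin d =>
            if p.1 = q.2 ∧ p.2 = q.1 then (1:ℂ) else 0)))).diag p
      = ((d:ℂ)*((d:ℂ)-1))⁻¹ * (if p.1 = p.2 then (0:ℂ) else 1) := by
    intro p
    simp only [Matrix.diag_apply, Matrix.smul_apply, Matrix.sub_apply,
      Matrix.one_apply, Matrix.of_apply, smul_eq_mul]
    by_cases h : p.1 = p.2 <;> simp [h] <;> field_simp <;> ring
  rw [Finset.sum_congr rfl fun p _ => key p, ← Finset.mul_sum, offdiag_card]
  field_simp

end AuxErrProb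

/-- the POVM `{G_d^{⊗n}, 1 − G_d^{⊗n}}` has error probability exactly
`p ((d−1)/(d+1))^n`. -/
theorem errProb_G_tpow (d : ℕ) (hd : 2 ≤ d) (n : ℕ) (p : ℝ) (hp0 : 0 ≤ p) (hp1 : p ≤ 1) :
    (p : ℂ) * (tpow n (Gmat d) * tpow n (wernerSym d)).trace
      + (1 - (p : ℂ)) * ((1 - tpow n (Gmat d)) * tpow n (wernerAsym d)).trace
      = (p : ℂ) * (((d : ℂ) - 1) / ((d : ℂ) + 1)) ^ n := by
  have h1 : (tpow n (Gmat d) * tpow n (wernerSym d)).trace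
      = (((d : ℂ) - 1) / ((d : ℂ) + 1)) ^ n := by
    rw [trace_tpow_mul, trGsym d hd]
  have h2 : ((1 - tpow n (Gmat d)) * tpow n (wernerAsym d)).trace = 0 := by
    rw [Matrix.sub_mul, Matrix.one_mul, Matrix.trace_sub, trace_tpow_mul, trace_tpow,
      trGasym d hd, trAsym d hd, one_pow, sub_self]
  rw [h1, h2, mul_zero, add_zero]

end
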